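/- Let p be an odd prime, Fp = ZMod p, let k be an even positive natural number, let s ∈ Fp be a nonsquare (so s ≠ 0 and there is no t ∈ Fp with t² = s), and let q ∈ Fp be nonzero. Let D_s be the k×k diagonal matrix diag(1, …, 1, s) (diagonal entries 1 except the last, which is s). Then there exists a k×k matrix C over Fp with Cᵀ·D_s·C = q·D_s. -/

import Mathlib

open Matrix

lemma block2 {F : Type*} [CommRing F] (t u v q : F) (h : u ^ 2 + t * v ^ 2 = q) :
    (!![u, -(t * v); v, u])ᵀ * !![1, 0; 0, t] * !![u, -(t * v); v, u] = q • !![(1 : F), 0; 0, t] := by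
  ext i j
  fin_cases i <;> fin_cases j <;>
    simp [Matrix.mul_apply, Fin.sum_univ_two, Matrix.vecHead, Matrix.vecTail]
  all_goals first
    | linear_combination h
    | linear_combination t * h
    | ring

lemma repr2 {p : ℕ} [Fact p.Prime] (hodd : Odd p) (s q : ZMod p) (hs : s ≠ 0)
    (hs2 : ¬∃ t : ZMod p, t ^ 2 = s) (hq : q ≠ 0) :
    ∃ x y : ZMod p, x ^ 2 + s * y ^ 2 = q := by
  by_cases h : IsSquare q
  · obtain ⟨c, hc⟩ := h
    exact ⟨c, 0, by rw [hc]; ring⟩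
  · have hss : ¬IsSquare s := by
      rintro ⟨c, hc⟩; exact hs2 ⟨c, by rw [hc]; ring⟩
    have hF : ringChar (ZMod p) ≠ 2 := by
      rw [ZMod.ringChar_zmod_n]
      rintro rfl; simp [Nat.odd_iff] at hodd
    have h1 : quadraticChar (ZMod p) q = -1 := quadraticChar_neg_one_iff_not_isSquare.mpr h
    have h2 : quadraticChar (ZMod p) s = -1 := quadraticChar_neg_one_iff_not_isSquare.mpr hss
    have h3 : quadraticChar (ZMod p) (q * s) = 1 := by
      rw [_root_.map_mul, h1, h2]; ring
    have h4 : IsSquare (q * s) := by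
      rw [← quadraticChar_one_iff_isSquare (mul_ne_zero hq hs)]; exact h3
    obtain ⟨w, hw⟩ := h4
    refine ⟨0, w / s, ?_⟩
    field_simp
    linear_combination (-1) * hw

/-- Over `Fp = ZMod p` (`p` an odd prime), for `k` even and positive,
`s` a nonsquare and `q ≠ 0`, with `D_s = diag(1, …, 1, s)` (k×k), there exists a
`k×k` matrix `C` with `Cᵀ·D_s·C = q·D_s`. -/
theorem stmt_6 (p : ℕ) (hp : p.Prime) (hodd : Odd p)
    (k : ℕ) (hk : 0 < k) (hkeven : Even k)
    (s : ZMod p) (hs : s ≠ 0) (hs2 : ¬∃ t : ZMod p, t ^ 2 = s)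
    (q : ZMod p) (hq : q ≠ 0) :
    ∃ C : Matrix (Fin k) (Fin k) (ZMod p),
      Cᵀ * (Matrix.diagonal fun i : Fin k => if i.val = k - 1 then s else 1) * C =
        q • (Matrix.diagonal fun i : Fin k => if i.val = k - 1 then s else 1) := by
  haveI : Fact p.Prime := ⟨hp⟩
  obtain ⟨a, b, hab⟩ := ZMod.sq_add_sq p q
  obtain ⟨x, y, hxy⟩ := repr2 hodd s q hs hs2 hq
  have hk2 : k / 2 * 2 = k := Nat.div_mul_cancel hkeven.two_dvd
  let e : Fin 2 × Fin (k / 2) ≃ Fin k :=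
    ((Equiv.prodComm (Fin 2) (Fin (k / 2))).trans finProdFinEquiv).trans (finCongr hk2)
  have he : ∀ (r : Fin 2) (m : Fin (k / 2)), (e (r, m)).val = r.val + 2 * m.val := by
    intro r m; simp [e, finProdFinEquiv]
  set t : Fin (k / 2) → ZMod p := fun m => if m.val = k / 2 - 1 then s else 1 with ht
  set u : Fin (k / 2) → ZMod p := fun m => if m.val = k / 2 - 1 then x else a with hu
  set v : Fin (k / 2) → ZMod p := fun m => if m.val = k / 2 - 1 then y else b with hv
  let Cf : Fin (k / 2) → Matrix (Fin 2) (Fin 2) (ZMod p) :=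
    fun m => !![u m, -(t m * v m); v m, u m]
  let Df : Fin (k / 2) → Matrix (Fin 2) (Fin 2) (ZMod p) := fun m => !![1, 0; 0, t m]
  have hblock : ∀ m, (Cf m)ᵀ * Df m * Cf m = q • Df m := by
    intro m
    refine block2 (t m) (u m) (v m) q ?_
    by_cases hm : m.val = k / 2 - 1 <;> simp [ht, hu, hv, hm] <;> [exact hxy; simpa using hab]
  have hD : (Matrix.diagonal fun i : Fin k => if i.val = k - 1 then s else 1) =
      (blockDiagonal Df).submatrix e.symm e.symm := by
    ext i j
    obtain ⟨⟨r, m⟩, rfl⟩ := e.surjective i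
    obtain ⟨⟨r', m'⟩, rfl⟩ := e.surjective j
    simp only [submatrix_apply, Equiv.symm_apply_apply, blockDiagonal_apply, diagonal_apply]
    by_cases hmm : m = m'
    · subst hmm
      by_cases hrr : r = r'
      · subst hrr
        simp only [if_pos rfl]
        have hval : (e (r, m)).val = r.val + 2 * m.val := he r m
        have h1 : ((e (r, m)).val = k - 1) ↔ (m.val = k / 2 - 1 ∧ r.val = 1) := by
          rw [hval]
          have h2 := r.isLt
          have h3 := m.isLt
          omega
        by_cases hc : (e (r, m)).val = k - 1
        · obtain ⟨hm1, hr1⟩ := h1.mp hc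
          have : r = 1 := by omega
          subst this
          simp [hc, Df, ht, hm1]
        · have := h1
          simp only [hc, if_false]
          rcases Fin.exists_fin_two.mp ⟨r, rfl⟩ with h | h
          all_goals {
            by_cases hr0 : r.val = 0
            · have : r = 0 := by omega
              subst this; simp [Df]
            · have : r = 1 := by omega
              subst this
              have hm1 : ¬ m.val = k / 2 - 1 := fun hmm1 => hc (h1.mpr ⟨hmm1, rfl⟩)
              simp [Df, ht, hm1] }
      · have hne : e (r, m) ≠ e (r', m) := fun hcon => hrr (by
          have := e.injective hcon; exact (Prod.mk.injEq _ _ _ _ ▸ this).1)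
        rw [if_neg hne, if_pos rfl]
        fin_cases r <;> fin_cases r' <;> simp_all [Df]
    · have hne : e (r, m) ≠ e (r', m') := fun hcon => hmm (by
        have := e.injective hcon
        exact (Prod.mk.injEq _ _ _ _ ▸ this).2)
      simp [hne, hmm]
  refine ⟨(blockDiagonal Cf).submatrix e.symm e.symm, ?_⟩
  rw [hD, transpose_submatrix, submatrix_mul_equiv, submatrix_mul_equiv]
  have : (blockDiagonal Cf)ᵀ * blockDiagonal Df * blockDiagonal Cf
      = q • blockDiagonal Df := by
    rw [blockDiagonal_transpose, ← blockDiagonal_mul, ← blockDiagonal_mul]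
    rw [← blockDiagonal_smul]
    exact congrArg _ (funext hblock)
  rw [this, submatrix_smul]; rfl
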